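/- Let K be a commutative ring with char(K) = 2, and let G be the central product of σ-groups H₁, ..., H_n (n ≥ 2), H_i = ⟨a_i, b_i⟩, with common central commutator c of order 2, together with a central Abelian subgroup, where σ(a_i) = a_i c and σ(b_i) = b_i c for all i, and f is trivial. Then KG is σ-normal: xx^σ = x^σx for all x ∈ KG, where x^σ = Σ α_g σ(g). -/

import Mathlib

noncomputable def sigmaMap {K G : Type*} [CommRing K] [Group G] (σ : G → G) (f : G →* Kˣ)
    (x : MonoidAlgebra K G) : MonoidAlgebra K G :=
  Finsupp.sum x.coeff fun g a => MonoidAlgebra.single (σ g) (a * (f g : K))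

set_option maxHeartbeats 1600000 in
theorem stmt_19 {K G : Type*} [CommRing K] [Group G] (hchar : ringChar K = 2)
    (n : ℕ) (hn : 2 ≤ n) (a b : Fin n → G) (c : G)
    (hc1 : c ≠ 1) (hc2 : c ^ 2 = 1) (hcz : c ∈ Subgroup.center G)
    (hcomm : ∀ i, (a i)⁻¹ * (b i)⁻¹ * a i * b i = c)
    (hfac : ∀ i j, i ≠ j →
      Commute (a i) (a j) ∧ Commute (a i) (b j) ∧ Commute (b i) (b j))
    (C : Subgroup G) (hC : C ≤ Subgroup.center G)
    (hgen : Subgroup.closure (Set.range a ∪ Set.range b) ⊔ C = ⊤)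
    (σ : G → G)
    (hanti : ∀ x y : G, σ (x * y) = σ y * σ x)
    (hord : ∀ x : G, σ (σ x) = x)
    (hσa : ∀ i, σ (a i) = a i * c) (hσb : ∀ i, σ (b i) = b i * c)
    (hσC : ∀ d ∈ C, σ d = d ∨ σ d = d * c) :
    ∀ x : MonoidAlgebra K G,
      x * sigmaMap σ (1 : G →* Kˣ) x = sigmaMap σ (1 : G →* Kˣ) x * x := by
  classical
  -- basic facts about c
  have hcc : ∀ z : G, c * z = z * c := fun z => (Subgroup.mem_center_iff.mp hcz z).symm
  have hcc1 : c * c = 1 := by have h := hc2; rwa [pow_two] at h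
  have hcinv : c⁻¹ = c := inv_eq_of_mul_eq_one_right hcc1
  have A1 : ∀ u v : G, u * (v * c) = (u * v) * c := fun u v => (mul_assoc u v c).symm
  have A2 : ∀ u v : G, (u * c) * v = (u * v) * c := by
    intro u v; rw [mul_assoc, hcc v, ← mul_assoc]
  have e3c : ∀ u : G, ((u * c) * c) = u := by
    intro u; rw [mul_assoc, hcc1, mul_one]
  -- the subgroup generated by c
  have hZn : (Subgroup.zpowers c).Normal := by
    constructor
    intro m hm g
    have hmz : g * m = m * g := Subgroup.mem_center_iff.mp (Subgroup.zpowers_le.mpr hcz hm) g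
    have : g * m * g⁻¹ = m := by rw [hmz, mul_assoc, mul_inv_cancel, mul_one]
    rwa [this]
  haveI := hZn
  have hZmem : ∀ z ∈ Subgroup.zpowers c, z = 1 ∨ z = c := by
    intro z hz
    obtain ⟨k, hk⟩ := Subgroup.mem_zpowers_iff.mp hz
    have hc2z : c ^ (2 : ℤ) = 1 := by
      have : c ^ ((2 : ℕ) : ℤ) = c ^ (2 : ℕ) := zpow_natCast c 2
      rw [hc2] at this; exact_mod_cast this
    rcases Int.even_or_odd k with ⟨m, hm⟩ | ⟨m, hm⟩
    · left; rw [← hk, hm, ← two_mul, zpow_mul, hc2z, one_zpow]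
    · right; rw [← hk, hm, zpow_add, zpow_mul, hc2z, one_zpow, zpow_one, one_mul]
  set π : G →* G ⧸ Subgroup.zpowers c := QuotientGroup.mk' (Subgroup.zpowers c) with hπ
  have hπc : π c = 1 := (QuotientGroup.eq_one_iff c).mpr (Subgroup.mem_zpowers c)
  -- generating set
  set S : Set G := (Set.range a ∪ Set.range b) ∪ ↑C with hSdef
  have hS : Subgroup.closure S = ⊤ := by
    rw [hSdef, Subgroup.closure_union, Subgroup.closure_eq]
    exact hgen
  have hab : ∀ i, a i * b i = b i * a i * c := by
    intro i; rw [← hcomm i]; group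
  have hCg : ∀ d ∈ C, ∀ z : G, Commute d z := fun d hd z =>
    ((Subgroup.mem_center_iff.mp (hC hd) z).symm)
  -- images of generators commute in the quotient
  have key2 : ∀ i, Commute (π (a i)) (π (b i)) := by
    intro i
    show π (a i) * π (b i) = π (b i) * π (a i)
    rw [← map_mul, ← map_mul, hab i, map_mul, map_mul, hπc, mul_one]
  have hbase : ∀ s ∈ S, ∀ t ∈ S, Commute (π s) (π t) := by
    intro s hs t ht
    rcases hs with (⟨i, rfl⟩ | ⟨i, rfl⟩) | hs
    · rcases ht with (⟨j, rfl⟩ | ⟨j, rfl⟩) | ht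
      · rcases eq_or_ne i j with rfl | hij
        · exact Commute.refl _
        · exact ((hfac i j hij).1).map π
      · rcases eq_or_ne i j with rfl | hij
        · exact key2 i
        · exact ((hfac i j hij).2.1).map π
      · exact ((hCg t ht (a i)).symm).map π
    · rcases ht with (⟨j, rfl⟩ | ⟨j, rfl⟩) | ht
      · rcases eq_or_ne j i with rfl | hij
        · exact (key2 j).symm
        · exact ((hfac j i hij).2.1).symm.map π
      · rcases eq_or_ne i j with rfl | hij
        · exact Commute.refl _
        · exact ((hfac i j hij).2.2).map π
      · exact ((hCg t ht (b i)).symm).map π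
    · exact (hCg s hs t).map π
  -- the quotient is commutative
  have hQcomm : ∀ x y : G, π x * π y = π y * π x := by
    intro x y
    have hx : x ∈ Subgroup.closure S := hS ▸ Subgroup.mem_top x
    have hy : y ∈ Subgroup.closure S := hS ▸ Subgroup.mem_top y
    exact Subgroup.closure_induction₂
      (p := fun x y _ _ => Commute (π x) (π y))
      (fun u v hu hv => hbase u hu v hv)
      (fun u _ => by show Commute (π 1) (π u); rw [map_one]; exact Commute.one_left _)
      (fun u _ => by show Commute (π u) (π 1); rw [map_one]; exact Commute.one_right _)
      (fun u v w _ _ _ h1 h2 => by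
        show Commute (π (u * v)) (π w); rw [map_mul]; exact h1.mul_left h2)
      (fun u v w _ _ _ h1 h2 => by
        show Commute (π w) (π (u * v)); rw [map_mul]; exact h1.mul_right h2)
      (fun u v _ _ h => by show Commute (π u⁻¹) (π v); rw [map_inv]; exact h.inv_left)
      (fun u v _ _ h => by show Commute (π u) (π v⁻¹); rw [map_inv]; exact h.inv_right)
      hx hy
  -- commutators lie in {1, c}
  have commA : ∀ g h : G, h * g = g * h ∨ h * g = g * h * c := by
    intro g h
    have hq : (↑(g * h) : G ⧸ Subgroup.zpowers c) = ↑(h * g) := by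
      have : π (g * h) = π (h * g) := by
        rw [map_mul, map_mul]; exact hQcomm g h
      exact this
    have hmem : (g * h)⁻¹ * (h * g) ∈ Subgroup.zpowers c := QuotientGroup.eq.mp hq
    have hrw : h * g = (g * h) * ((g * h)⁻¹ * (h * g)) := by group
    rcases hZmem _ hmem with h1 | h1
    · left; rw [hrw, h1, mul_one]
    · right; rw [hrw, h1]
  -- σ fixes 1 and respects inverses
  have hσ1 : σ 1 = 1 := by
    have h := hanti 1 1
    rw [one_mul] at h
    have h1 : σ 1 * 1 = σ 1 * σ 1 := by rw [mul_one]; exact h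
    exact (mul_left_cancel h1).symm
  have hσinv : ∀ x : G, σ x⁻¹ = (σ x)⁻¹ := by
    intro x
    have h1 : σ (x * x⁻¹) = σ x⁻¹ * σ x := hanti x x⁻¹
    rw [mul_inv_cancel, hσ1] at h1
    exact eq_inv_of_mul_eq_one_left h1.symm
  -- every element is σ-fixed up to c
  have hB : ∀ g : G, σ g = g ∨ σ g = g * c := by
    intro g
    have hg : g ∈ Subgroup.closure S := hS ▸ Subgroup.mem_top g
    refine Subgroup.closure_induction ?_ ?_ ?_ ?_ hg
    · intro s hs
      rcases hs with (⟨i, rfl⟩ | ⟨i, rfl⟩) | hs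
      · exact Or.inr (hσa i)
      · exact Or.inr (hσb i)
      · exact hσC s hs
    · exact Or.inl hσ1
    · intro p q _ _ ihp ihq
      rcases ihp with h1 | h1 <;> rcases ihq with h2 | h2 <;>
        rcases commA p q with h3 | h3 <;>
        rw [hanti p q, h1, h2] <;>
        (try simp only [A1, A2]) <;> rw [h3] <;> (try rw [e3c (p * q)]) <;>
        first
          | exact Or.inl rfl
          | exact Or.inr rfl
    · intro p _ ihp
      rcases ihp with h1 | h1
      · left; rw [hσinv, h1]
      · right; rw [hσinv, h1, mul_inv_rev, hcinv, hcc]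
  -- characteristic two facts
  have h2K : (2 : K) = 0 := by
    have h := ringChar.Nat.cast_ringChar (R := K)
    rw [hchar] at h; exact_mod_cast h
  have hKadd : ∀ y : K, y + y = 0 := by
    intro y
    have h : (2 : K) * y = 0 := by rw [h2K, zero_mul]
    rwa [two_mul] at h
  have htor : ∀ y : MonoidAlgebra K G, y + y = 0 := fun y =>
    MonoidAlgebra.ext <| Finsupp.ext fun g => by
      rw [MonoidAlgebra.coeff_add, Finsupp.add_apply]
      exact (hKadd (y.coeff g)).trans rfl
  have hcancel : ∀ u v : MonoidAlgebra K G, u + v = 0 → u = v := by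
    intro u v huv
    calc u = u + (v + v) := by rw [htor v, add_zero]
    _ = (u + v) + v := by rw [add_assoc]
    _ = v := by rw [huv, zero_add]
  have q1 : ∀ u v : MonoidAlgebra K G, u + v + (v + u) = 0 := by
    intro u v; rw [add_comm v u]; exact htor (u + v)
  have q2 : ∀ u v : MonoidAlgebra K G, u + v + (u + v) = 0 := fun u v => htor (u + v)
  have q3 : ∀ u v : MonoidAlgebra K G, u + u + (v + v) = 0 := by
    intro u v; rw [htor u, htor v, add_zero]
  -- main computation
  intro x
  set s : Finset G := x.coeff.support with hsdef
  have hxsum : x = ∑ g ∈ s, MonoidAlgebra.single g (x.coeff g) := (MonoidAlgebra.sum_coeff_single x).symm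
  have hσx : sigmaMap σ (1 : G →* Kˣ) x = ∑ h ∈ s, MonoidAlgebra.single (σ h) (x.coeff h) := by
    show (Finsupp.sum x.coeff fun g a => MonoidAlgebra.single (σ g) (a * ((1 : G →* Kˣ) g : K))) = _
    exact Finset.sum_congr rfl fun h _ => by simp
  have key : ∀ g h : G,
      (MonoidAlgebra.single (g * σ h) (x.coeff g * x.coeff h) +
        MonoidAlgebra.single (σ g * h) (x.coeff g * x.coeff h)) +
      (MonoidAlgebra.single (h * σ g) (x.coeff h * x.coeff g) +
        MonoidAlgebra.single (σ h * g) (x.coeff h * x.coeff g)) = 0 := by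
    intro g h
    rw [mul_comm (x.coeff h) (x.coeff g)]
    rcases hB g with h1 | h1 <;> rcases hB h with h2 | h2 <;>
      rcases commA g h with h3 | h3 <;>
      rw [h1, h2] <;> (try simp only [A1, A2]) <;> rw [h3] <;>
      (try rw [e3c (g * h)]) <;>
      first
        | exact q1 _ _
        | exact q2 _ _
        | exact q3 _ _
  have e1 : x * sigmaMap σ (1 : G →* Kˣ) x =
      ∑ p ∈ s ×ˢ s, MonoidAlgebra.single (p.1 * σ p.2) (x.coeff p.1 * x.coeff p.2) := by
    rw [Finset.sum_product' (s := s) (t := s)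
      (f := fun g h => MonoidAlgebra.single (g * σ h) (x.coeff g * x.coeff h))]
    calc x * sigmaMap σ (1 : G →* Kˣ) x
        = (∑ g ∈ s, MonoidAlgebra.single g (x.coeff g)) *
            (∑ h ∈ s, MonoidAlgebra.single (σ h) (x.coeff h)) := by rw [← hxsum, ← hσx]
      _ = ∑ g ∈ s, ∑ h ∈ s, MonoidAlgebra.single g (x.coeff g) *
            MonoidAlgebra.single (σ h) (x.coeff h) := Finset.sum_mul_sum _ _ _ _
      _ = ∑ g ∈ s, ∑ h ∈ s, MonoidAlgebra.single (g * σ h) (x.coeff g * x.coeff h) :=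
          Finset.sum_congr rfl fun g _ => Finset.sum_congr rfl fun h _ =>
            MonoidAlgebra.single_mul_single _ _ _ _
  have e2 : sigmaMap σ (1 : G →* Kˣ) x * x =
      ∑ p ∈ s ×ˢ s, MonoidAlgebra.single (σ p.1 * p.2) (x.coeff p.1 * x.coeff p.2) := by
    rw [Finset.sum_product' (s := s) (t := s)
      (f := fun g h => MonoidAlgebra.single (σ g * h) (x.coeff g * x.coeff h))]
    calc sigmaMap σ (1 : G →* Kˣ) x * x
        = (∑ g ∈ s, MonoidAlgebra.single (σ g) (x.coeff g)) *
            (∑ h ∈ s, MonoidAlgebra.single h (x.coeff h)) := by rw [← hxsum, ← hσx]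
      _ = ∑ g ∈ s, ∑ h ∈ s, MonoidAlgebra.single (σ g) (x.coeff g) *
            MonoidAlgebra.single h (x.coeff h) := Finset.sum_mul_sum _ _ _ _
      _ = ∑ g ∈ s, ∑ h ∈ s, MonoidAlgebra.single (σ g * h) (x.coeff g * x.coeff h) :=
          Finset.sum_congr rfl fun g _ => Finset.sum_congr rfl fun h _ =>
            MonoidAlgebra.single_mul_single _ _ _ _
  rw [e1, e2]
  apply hcancel
  rw [← Finset.sum_add_distrib]
  refine Finset.sum_involution (fun p _ => Prod.swap p) ?_ ?_ ?_ ?_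
  · intro p _
    exact key p.1 p.2
  · intro p _ hf hswap
    apply hf
    have h12 : p.2 = p.1 := congrArg Prod.fst hswap
    rw [h12]
    have hc' : p.1 * σ p.1 = σ p.1 * p.1 := by
      rcases hB p.1 with h1 | h1 <;> rw [h1]
      rw [A1, A2]
    rw [hc']
    exact htor _
  · intro p hp
    rw [Finset.mem_product] at hp ⊢
    exact ⟨hp.2, hp.1⟩
  · intro p _
    exact Prod.swap_swap p
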